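/- Fix λ > 0, κ > 0, a column vector x ∈ ℝ^T with x ≠ 0, and b ∈ ℝ^{1×d} with b = κ x^⊤ M for some fixed M ∈ ℝ^{T×d}. Consider f(β) = λ‖β‖₂ + (κ/2)‖M − xβ‖_F² over β ∈ ℝ^{1×d}. Then the unique minimizer of f is β* = (1/(κ x^⊤x)) (1 − λ/‖b‖₂)₊ b, where (·)₊ = max(·,0); in particular β* = 0 if and only if ‖b‖₂ ≤ λ. -/

import Mathlib

set_option maxHeartbeats 1000000 in
/-- Single-block Group Lasso update (Proposition 2, Bleakley & Vert):
with `b = κ xᵀ M`, the unique minimizer of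
`β ↦ λ‖β‖₂ + (κ/2)‖M − x βᵀ‖_F²` is the soft-thresholded vector
`β* = (1/(κ xᵀx)) (1 − λ/‖b‖₂)₊ b`, and `β* = 0 ↔ ‖b‖₂ ≤ λ`. -/
theorem group_lasso_block_update (T d : ℕ) (lam κ : ℝ) (hlam : 0 < lam)
    (hκ : 0 < κ) (x : Fin T → ℝ) (hx : x ≠ 0)
    (M : Matrix (Fin T) (Fin d) ℝ)
    (b : EuclideanSpace ℝ (Fin d))
    (hb : ∀ j, b j = κ * ∑ i, x i * M i j)
    (f : EuclideanSpace ℝ (Fin d) → ℝ)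
    (hf : ∀ β, f β = lam * ‖β‖ +
        (κ / 2) * ∑ i, ∑ j, (M i j - x i * β j) ^ 2)
    (βstar : EuclideanSpace ℝ (Fin d))
    (hβstar : βstar =
        ((1 / (κ * ∑ i, x i * x i)) * max (1 - lam / ‖b‖) 0) • b) :
    (∀ β, f βstar ≤ f β ∧ (f β = f βstar → β = βstar)) ∧
    (βstar = 0 ↔ ‖b‖ ≤ lam) := by
  classical
  have hxsum : 0 < ∑ i, x i * x i := by
    obtain ⟨i0, hi0⟩ : ∃ i, x i ≠ 0 := by
      by_contra h; push_neg at h; exact hx (funext h)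
    exact Finset.sum_pos' (fun i _ => mul_self_nonneg _)
      ⟨i0, Finset.mem_univ _, mul_self_pos.mpr hi0⟩
  set c : ℝ := κ * ∑ i, x i * x i with hc_def
  have hc : 0 < c := mul_pos hκ hxsum
  set t : ℝ := (1 / c) * max (1 - lam / ‖b‖) 0 with ht_def
  have ht0 : 0 ≤ t := mul_nonneg (by positivity) (le_max_right _ _)
  have hβ : βstar = t • b := hβstar
  -- inner product and norm as sums
  have hinner : ∀ a β : EuclideanSpace ℝ (Fin d), (inner ℝ a β : ℝ) = ∑ j, a j * β j := by
    intro a β; simp [PiLp.inner_apply, RCLike.inner_apply, conj_trivial, mul_comm]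
  have hnormsq : ∀ β : EuclideanSpace ℝ (Fin d), ‖β‖^2 = ∑ j, β j * β j := by
    intro β; rw [← real_inner_self_eq_norm_sq, hinner]
  -- f in inner-product form
  have hK : ∀ β, f β = lam * ‖β‖ + (κ/2) * (∑ i, ∑ j, M i j ^ 2)
      - (inner ℝ b β : ℝ) + (c/2) * ‖β‖^2 := by
    intro β
    rw [hf, hinner, hnormsq]
    have hb' : ∑ j, b j * β j = κ * ∑ i, ∑ j, x i * M i j * β j := by
      simp only [hb, Finset.sum_mul, Finset.mul_sum]
      rw [Finset.sum_comm]
      exact Finset.sum_congr rfl fun i _ => Finset.sum_congr rfl fun j _ => by ring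
    have expand : ∀ i j, (M i j - x i * β j)^2
        = M i j^2 - 2*(x i * M i j * β j) + (x i * x i)*(β j * β j) := by
      intro i j; ring
    have hsum : ∑ i, ∑ j, (M i j - x i * β j)^2
        = (∑ i, ∑ j, M i j^2) - 2*(∑ i, ∑ j, x i * M i j * β j)
          + (∑ i, x i * x i) * (∑ j, β j * β j) := by
      rw [Finset.sum_mul_sum]
      simp only [expand, Finset.sum_add_distrib, Finset.sum_sub_distrib, Finset.mul_sum]
    rw [hsum, hb', hc_def]; ring
  -- Cauchy-Schwarz
  have hCS : ∀ β : EuclideanSpace ℝ (Fin d), (inner ℝ b β : ℝ) ≤ ‖b‖ * ‖β‖ :=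
    fun β => real_inner_le_norm b β
  -- key quadratic growth inequality
  have key : ∀ β : EuclideanSpace ℝ (Fin d),
      f βstar + (c/2) * ‖β - βstar‖^2 ≤ f β := by
    intro β
    rw [hK β, hK βstar]
    have hβn : ‖βstar‖ = t * ‖b‖ := by
      rw [hβ, norm_smul, Real.norm_eq_abs, abs_of_nonneg ht0]
    have hIs : (inner ℝ b βstar : ℝ) = t * ‖b‖^2 := by
      rw [hβ, real_inner_smul_right, real_inner_self_eq_norm_sq]
    have hexp : ‖β‖^2 = ‖βstar‖^2 + 2*(inner ℝ βstar (β - βstar) : ℝ) + ‖β - βstar‖^2 := by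
      have h := norm_add_sq_real βstar (β - βstar)
      rwa [add_sub_cancel] at h
    have hIdiff : (inner ℝ βstar (β - βstar) : ℝ)
        = t * (inner ℝ b β : ℝ) - t^2 * ‖b‖^2 := by
      rw [hβ, real_inner_smul_left, inner_sub_right, real_inner_smul_right,
        real_inner_self_eq_norm_sq]
      ring
    have hN0 : (0:ℝ) ≤ ‖β‖ := norm_nonneg _
    rcases le_or_gt ‖b‖ lam with h | h
    · by_cases hb0 : b = 0
      · have hB : ‖b‖ = (0:ℝ) := by rw [hb0, norm_zero]
        have hI : (inner ℝ b β : ℝ) = 0 := by rw [hb0, inner_zero_left]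
        rw [hexp, hIdiff, hβn, hIs, hI, hB]
        nlinarith [mul_self_nonneg t, hc.le]
      · have hB0 : 0 < ‖b‖ := norm_pos_iff.mpr hb0
        have ht' : t = 0 := by
          have : (1:ℝ) ≤ lam / ‖b‖ := (one_le_div hB0).mpr h
          rw [ht_def, max_eq_right (by linarith), mul_zero]
        rw [hexp, hIdiff, hβn, hIs, ht']
        have := hCS β
        nlinarith [norm_nonneg b]
    · have hB0 : 0 < ‖b‖ := lt_trans hlam h
      have hmax : max (1 - lam / ‖b‖) 0 = 1 - lam / ‖b‖ := by
        apply max_eq_left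
        have : lam / ‖b‖ < 1 := (div_lt_one hB0).mpr h
        linarith
      have hct : c * t = 1 - lam / ‖b‖ := by
        rw [ht_def, hmax]; field_simp
      have hI' : lam / ‖b‖ * (inner ℝ b β : ℝ) ≤ lam * ‖β‖ := by
        have h1 : lam / ‖b‖ * (inner ℝ b β : ℝ) ≤ lam / ‖b‖ * (‖b‖ * ‖β‖) :=
          mul_le_mul_of_nonneg_left (hCS β) (by positivity)
        have h2 : lam / ‖b‖ * (‖b‖ * ‖β‖) = lam * ‖β‖ := by
          field_simp
        linarith
      have e1 : c * t * (inner ℝ b β : ℝ) = (inner ℝ b β : ℝ) - lam / ‖b‖ * (inner ℝ b β : ℝ) := by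
        rw [hct]; ring
      have e2 : c * t * (t * ‖b‖^2) = t * ‖b‖^2 - lam * (t * ‖b‖) := by
        rw [hct]
        have : lam / ‖b‖ * (t * ‖b‖^2) = lam * (t * ‖b‖) := by
          field_simp
        linarith [this]
      rw [hexp, hIdiff, hβn, hIs]
      nlinarith [e1, e2, hI']
  refine ⟨fun β => ⟨?_, fun heq => ?_⟩, ?_, ?_⟩
  · have hd : 0 ≤ (c/2) * ‖β - βstar‖^2 := mul_nonneg (by positivity) (sq_nonneg _)
    linarith [key β]
  · have hpos : 0 ≤ (c/2) * ‖β - βstar‖^2 := mul_nonneg (by positivity) (sq_nonneg _)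
    have hD : (c/2) * ‖β - βstar‖^2 ≤ 0 := by linarith [key β]
    have hz : ‖β - βstar‖^2 = 0 := by
      have h0 : (c/2) * ‖β - βstar‖^2 = 0 := le_antisymm hD hpos
      have hc2 : (c/2) ≠ 0 := by positivity
      exact (mul_eq_zero.mp h0).resolve_left hc2
    have : ‖β - βstar‖ = 0 := by
      have := sq_eq_zero_iff.mp hz
      exact this
    exact sub_eq_zero.mp (norm_eq_zero.mp this)
  · intro h0
    by_contra hcon
    push_neg at hcon
    have hB0 : 0 < ‖b‖ := lt_trans hlam hcon
    have hb0 : b ≠ 0 := norm_pos_iff.mp hB0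
    have hdivlt : lam / ‖b‖ < 1 := (div_lt_one hB0).mpr hcon
    have hmax : max (1 - lam / ‖b‖) 0 = 1 - lam / ‖b‖ :=
      max_eq_left (by linarith)
    have ht' : 0 < t := by
      rw [ht_def, hmax]
      have h1 : 0 < 1 - lam / ‖b‖ := by linarith
      positivity
    exact (smul_ne_zero (ne_of_gt ht') hb0) (hβ ▸ h0)
  · intro h
    by_cases hb0 : b = 0
    · rw [hβ, hb0, smul_zero]
    · have hB0 : 0 < ‖b‖ := norm_pos_iff.mpr hb0
      have ht' : t = 0 := by
        have : (1:ℝ) ≤ lam / ‖b‖ := (one_le_div hB0).mpr h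
        rw [ht_def, max_eq_right (by linarith), mul_zero]
      rw [hβ, ht', zero_smul]
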